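/- Let X be a real symmetric n×n matrix with X_{ii} ≥ 0 for all i, satisfying the 2×2 minor constraints X_{ij}² ≤ X_{ii}·X_{jj} for all pairs i, j, and tr(X) = 1. Then for every index i, ∑_{j=1}^n X_{ij}² ≤ X_{ii}. (This aggregates the n² second-order cone minor constraints into n second-order cone constraints.) -/
import Mathlib


/-- For a real symmetric `n × n` matrix `X` with nonnegative diagonal,
satisfying the 2×2 minor constraints `(X i j)² ≤ X i i * X j j` and `tr X = 1`, the
aggregated second-order cone constraints `∑ j, (X i j)² ≤ X i i` hold for every `i`. -/
theorem stmt_19 (n : ℕ) (hn : 1 ≤ n)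
    (X : Matrix (Fin n) (Fin n) ℝ) (hsymm : X.IsSymm)
    (hdiag : ∀ i, 0 ≤ X i i)
    (hminor : ∀ i j, (X i j) ^ 2 ≤ X i i * X j j)
    (htr : X.trace = 1) :
    ∀ i, ∑ j, (X i j) ^ 2 ≤ X i i := by
  intro i
  calc ∑ j, (X i j) ^ 2 ≤ ∑ j, X i i * X j j :=
        Finset.sum_le_sum fun j _ => hminor i j
    _ = X i i * X.trace := by
        rw [Matrix.trace, Finset.mul_sum]; rfl
    _ = X i i := by rw [htr, mul_one]
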